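/- arXiv:0906.2242 — 2 statements merged into one kernel-verified Lean document; each statement's English description precedes it below -/
import Mathlib

section
/- Let ρ ∈ ℝ and let M_ρ denote the (2m+1)×(2m) matrix [[−ρ I_m, B], [Bᵀ, −ρ I_m], [β e_mᵀ, 0]]. Then for every x, y ∈ ℝ^m, setting ψ = (P x; Q y) and z = (x; y), one has ‖Ã ψ − ρ ψ‖ = ‖M_ρ z‖. Consequently, if z_i = (x_i; y_i) is a unit right singular vector of M_ρ associated with its smallest singular value σ_min (so that ‖M_ρ z_i‖ = σ_min = min over unit z ∈ ℝ^{2m} of ‖M_ρ z‖), then ψ̃_i = (P x_i; Q y_i) is a unit vector of E satisfying ‖Ã ψ̃_i − ρ ψ̃_i‖ = σ_min = min over unit ψ ∈ E of ‖Ã ψ − ρ ψ‖. -/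
open Matrix

noncomputable def enormR {ι : Type*} [Fintype ι] (v : ι → ℝ) : ℝ :=
  Real.sqrt (∑ i, v i ^ 2)

def eLast (m : ℕ) : Fin m → ℝ := fun i => if (i : ℕ) = m - 1 then 1 else 0

def HarmonicPencil {m : ℕ} (B : Matrix (Fin m) (Fin m) ℝ) (β θ : ℝ)
    (s w : Fin m → ℝ) : Prop :=
  θ • B.mulVec w = (B * Bᵀ + β ^ 2 • vecMulVec (eLast m) (eLast m)).mulVec s ∧
  θ • Bᵀ.mulVec s = (Bᵀ * B).mulVec w

noncomputable def specNorm {m n : Type*} [Fintype m] [Fintype n] [DecidableEq n]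
    (A : Matrix m n ℝ) : ℝ :=
  ‖LinearMap.toContinuousLinearMap (Matrix.toEuclideanLin A)‖

noncomputable def sep {n : Type*} [Fintype n] [DecidableEq n] (a : ℝ) (G : Matrix n n ℝ) : ℝ :=
  sInf {r | ∃ x : n → ℝ, enormR x = 1 ∧ r = enormR ((a • (1 : Matrix n n ℝ) - G).mulVec x)}

noncomputable def sigmaMin {m n : Type*} [Fintype m] [Fintype n] (C : Matrix m n ℝ) : ℝ :=
  sSup {c | 0 ≤ c ∧ ∀ h, c * enormR h ≤ enormR (C.mulVec h)}

noncomputable def sinAngleVec {ι : Type*} [Fintype ι] (x y : ι → ℝ) : ℝ :=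
  Real.sqrt (1 - (x ⬝ᵥ y) ^ 2 / (enormR x ^ 2 * enormR y ^ 2))

noncomputable def toE {ι : Type*} (v : ι → ℝ) : EuclideanSpace ℝ ι :=
  (WithLp.equiv 2 (ι → ℝ)).symm v

noncomputable def ofE {ι : Type*} (v : EuclideanSpace ℝ ι) : ι → ℝ :=
  WithLp.equiv 2 (ι → ℝ) v

noncomputable def sinAngleSub {ι : Type*} [Fintype ι] (x : EuclideanSpace ℝ ι)
    (E : Submodule ℝ (EuclideanSpace ℝ ι)) : ℝ :=
  ‖x - (E.orthogonalProjectionOnto x : EuclideanSpace ℝ ι)‖ / ‖x‖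

def Atilde {M N : ℕ} (A : Matrix (Fin M) (Fin N) ℝ) :
    Matrix (Fin M ⊕ Fin N) (Fin M ⊕ Fin N) ℝ :=
  fromBlocks 0 A Aᵀ 0

def Btilde {m : ℕ} (B : Matrix (Fin m) (Fin m) ℝ) :
    Matrix (Fin m ⊕ Fin m) (Fin m ⊕ Fin m) ℝ :=
  fromBlocks 0 B Bᵀ 0

noncomputable def Ctilde {m : ℕ} (B : Matrix (Fin m) (Fin m) ℝ) (β : ℝ) :
    Matrix (Fin m ⊕ Fin m) (Fin m ⊕ Fin m) ℝ :=
  fromBlocks (B * Bᵀ + β ^ 2 • vecMulVec (eLast m) (eLast m)) 0 0 (Bᵀ * B)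

noncomputable def colSpanE {M N m : ℕ} (P : Matrix (Fin M) (Fin m) ℝ)
    (Q : Matrix (Fin N) (Fin m) ℝ) : Submodule ℝ (EuclideanSpace ℝ (Fin M ⊕ Fin N)) :=
  Submodule.span ℝ {z | ∃ x y : Fin m → ℝ, z = toE (Sum.elim (P.mulVec x) (Q.mulVec y))}

noncomputable def Mrho {m : ℕ} (B : Matrix (Fin m) (Fin m) ℝ) (β ρ : ℝ) :
    Matrix ((Fin m ⊕ Fin m) ⊕ Unit) (Fin m ⊕ Fin m) ℝ :=
  Matrix.fromRows
    (fromBlocks (-(ρ • (1 : Matrix (Fin m) (Fin m) ℝ))) B Bᵀ (-(ρ • 1)))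
    (Matrix.of fun (_ : Unit) j => Sum.elim (β • eLast m) (0 : Fin m → ℝ) j)



section Aux
open Matrix

private lemma vmv_mulVec {n k : Type*} [Fintype k] (w : n → ℝ) (v x : k → ℝ) :
    (vecMulVec w v) *ᵥ x = (v ⬝ᵥ x) • w := by
  ext i
  simp [vecMulVec, mulVec, dotProduct, Finset.mul_sum, mul_comm, mul_left_comm, mul_assoc]

private lemma dot_self_nonneg' {ι : Type*} [Fintype ι] (v : ι → ℝ) : (0:ℝ) ≤ v ⬝ᵥ v :=
  Finset.sum_nonneg fun i _ => mul_self_nonneg (v i)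

private lemma enorm_elim {ι κ : Type*} [Fintype ι] [Fintype κ] (a : ι → ℝ) (b : κ → ℝ) :
    enormR (Sum.elim a b) = Real.sqrt (a ⬝ᵥ a + b ⬝ᵥ b) := by
  simp [enormR, Fintype.sum_sum_type, dotProduct, sq]

private lemma ortho_dot {M m : ℕ} {P : Matrix (Fin M) (Fin m) ℝ} (hP : Pᵀ * P = 1)
    (u w : Fin m → ℝ) : (P *ᵥ u) ⬝ᵥ (P *ᵥ w) = u ⬝ᵥ w := by
  rw [Matrix.dotProduct_mulVec, ← Matrix.vecMul_transpose, Matrix.vecMul_vecMul, hP,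
    Matrix.vecMul_one]

end Aux

theorem stmt8 (m M N : ℕ) (hm : 0 < m)
    (A : Matrix (Fin M) (Fin N) ℝ)
    (P : Matrix (Fin M) (Fin m) ℝ) (Q : Matrix (Fin N) (Fin m) ℝ)
    (hP : Pᵀ * P = 1) (hQ : Qᵀ * Q = 1)
    (B : Matrix (Fin m) (Fin m) ℝ) (β : ℝ) (q : Fin N → ℝ)
    (hq : enormR q = 1) (hQq : Qᵀ.mulVec q = 0)
    (hAQ : A * Q = P * B)
    (hAP : Aᵀ * P = Q * Bᵀ + β • vecMulVec q (eLast m))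
    (ρ : ℝ) :
    (∀ x y : Fin m → ℝ,
      enormR ((Atilde A).mulVec (Sum.elim (P.mulVec x) (Q.mulVec y))
          - ρ • Sum.elim (P.mulVec x) (Q.mulVec y))
        = enormR ((Mrho B β ρ).mulVec (Sum.elim x y))) ∧
    (∀ xi yi : Fin m → ℝ,
      enormR (Sum.elim xi yi) = 1 →
      enormR ((Mrho B β ρ).mulVec (Sum.elim xi yi))
        = sInf {r | ∃ z : Fin m ⊕ Fin m → ℝ, enormR z = 1 ∧
            r = enormR ((Mrho B β ρ).mulVec z)} →
      enormR (Sum.elim (P.mulVec xi) (Q.mulVec yi)) = 1 ∧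
      (∃ x y : Fin m → ℝ,
        Sum.elim (P.mulVec xi) (Q.mulVec yi) = Sum.elim (P.mulVec x) (Q.mulVec y)) ∧
      enormR ((Atilde A).mulVec (Sum.elim (P.mulVec xi) (Q.mulVec yi))
          - ρ • Sum.elim (P.mulVec xi) (Q.mulVec yi))
        = enormR ((Mrho B β ρ).mulVec (Sum.elim xi yi)) ∧
      enormR ((Atilde A).mulVec (Sum.elim (P.mulVec xi) (Q.mulVec yi))
          - ρ • Sum.elim (P.mulVec xi) (Q.mulVec yi))
        = sInf {r | ∃ ψ : Fin M ⊕ Fin N → ℝ,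
            (∃ x y : Fin m → ℝ, ψ = Sum.elim (P.mulVec x) (Q.mulVec y)) ∧
            enormR ψ = 1 ∧ r = enormR ((Atilde A).mulVec ψ - ρ • ψ)}) := by
  
  classical
  -- basic dot product facts
  have hqq : q ⬝ᵥ q = 1 := by
    have h0 : (0:ℝ) ≤ q ⬝ᵥ q := dot_self_nonneg' q
    have h1 : Real.sqrt (q ⬝ᵥ q) = 1 := by
      rw [← hq]; simp [enormR, dotProduct, sq]
    nlinarith [Real.sq_sqrt h0]
  have hQvq : ∀ v : Fin m → ℝ, (Q *ᵥ v) ⬝ᵥ q = 0 := by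
    intro v
    rw [dotProduct_comm, Matrix.dotProduct_mulVec, ← Matrix.mulVec_transpose, hQq,
      zero_dotProduct]
  -- the two vector identities
  have hLvec : ∀ x y : Fin m → ℝ,
      (Atilde A) *ᵥ (Sum.elim (P *ᵥ x) (Q *ᵥ y)) - ρ • Sum.elim (P *ᵥ x) (Q *ᵥ y)
      = Sum.elim (P *ᵥ (B *ᵥ y - ρ • x))
          (Q *ᵥ (Bᵀ *ᵥ x - ρ • y) + (β * (eLast m ⬝ᵥ x)) • q) := by
    intro x y
    have h1 : A *ᵥ (Q *ᵥ y) = P *ᵥ (B *ᵥ y) := by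
      rw [Matrix.mulVec_mulVec, hAQ, ← Matrix.mulVec_mulVec]
    have h2 : Aᵀ *ᵥ (P *ᵥ x) = Q *ᵥ (Bᵀ *ᵥ x) + (β * (eLast m ⬝ᵥ x)) • q := by
      rw [Matrix.mulVec_mulVec, hAP, Matrix.add_mulVec, Matrix.smul_mulVec, vmv_mulVec,
        ← Matrix.mulVec_mulVec, smul_smul]
    rw [Atilde, Matrix.fromBlocks_mulVec]
    simp only [Sum.elim_comp_inl, Sum.elim_comp_inr, Matrix.zero_mulVec, zero_add, add_zero,
      h1, h2, Matrix.mulVec_sub, Matrix.mulVec_smul]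
    ext i
    cases i <;> simp <;> ring
  have hRvec : ∀ x y : Fin m → ℝ,
      (Mrho B β ρ) *ᵥ (Sum.elim x y)
      = Sum.elim (Sum.elim (B *ᵥ y - ρ • x) (Bᵀ *ᵥ x - ρ • y))
          (fun _ => β * (eLast m ⬝ᵥ x)) := by
    intro x y
    rw [Mrho, Matrix.fromRows_mulVec, Matrix.fromBlocks_mulVec]
    simp only [Sum.elim_comp_inl, Sum.elim_comp_inr, Matrix.neg_mulVec,
      Matrix.smul_mulVec, Matrix.one_mulVec]
    ext i
    rcases i with (i | i) | i
    · simp; ring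
    · simp; ring
    · simp [mulVec, dotProduct, Fintype.sum_sum_type, eLast, Finset.mul_sum]
  -- the norm identity (part 1)
  have part1 : ∀ x y : Fin m → ℝ,
      enormR ((Atilde A).mulVec (Sum.elim (P.mulVec x) (Q.mulVec y))
          - ρ • Sum.elim (P.mulVec x) (Q.mulVec y))
        = enormR ((Mrho B β ρ).mulVec (Sum.elim x y)) := by
    intro x y
    rw [hLvec x y, hRvec x y, enorm_elim, enorm_elim]
    set u := B *ᵥ y - ρ • x
    set v := Bᵀ *ᵥ x - ρ • y
    set c := β * (eLast m ⬝ᵥ x)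
    congr 1
    have hL2 : (Q *ᵥ v + c • q) ⬝ᵥ (Q *ᵥ v + c • q) = v ⬝ᵥ v + c * c := by
      have h1 := hQvq v
      have h2 : q ⬝ᵥ (Q *ᵥ v) = 0 := by rw [dotProduct_comm]; exact h1
      simp only [add_dotProduct, dotProduct_add, smul_dotProduct,
        dotProduct_smul, smul_eq_mul, ortho_dot hQ, h1, h2, hqq]
      ring
    have hunit : (fun (_ : Unit) => c) ⬝ᵥ (fun (_ : Unit) => c) = c * c := by
      simp [dotProduct]
    have hsum : (Sum.elim u v) ⬝ᵥ (Sum.elim u v) = u ⬝ᵥ u + v ⬝ᵥ v := by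
      simp [dotProduct, Fintype.sum_sum_type]
    rw [ortho_dot hP, hL2, hunit, hsum]
    ring
  -- norm preservation
  have hpres : ∀ x y : Fin m → ℝ,
      enormR (Sum.elim (P *ᵥ x) (Q *ᵥ y)) = enormR (Sum.elim x y) := by
    intro x y
    rw [enorm_elim, enorm_elim, ortho_dot hP, ortho_dot hQ]
  refine ⟨part1, ?_⟩
  intro xi yi hz1 hz2
  -- the two sInf sets coincide
  have hsets : {r | ∃ ψ : Fin M ⊕ Fin N → ℝ,
      (∃ x y : Fin m → ℝ, ψ = Sum.elim (P.mulVec x) (Q.mulVec y)) ∧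
      enormR ψ = 1 ∧ r = enormR ((Atilde A).mulVec ψ - ρ • ψ)}
      = {r | ∃ z : Fin m ⊕ Fin m → ℝ, enormR z = 1 ∧
          r = enormR ((Mrho B β ρ).mulVec z)} := by
    ext r
    constructor
    · rintro ⟨ψ, ⟨x, y, rfl⟩, h1, rfl⟩
      exact ⟨Sum.elim x y, by rwa [hpres x y] at h1, part1 x y⟩
    · rintro ⟨z, h1, rfl⟩
      refine ⟨Sum.elim (P *ᵥ (z ∘ Sum.inl)) (Q *ᵥ (z ∘ Sum.inr)), ⟨_, _, rfl⟩, ?_, ?_⟩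
      · rw [hpres]
        rwa [Sum.elim_comp_inl_inr] at *
      · rw [part1, Sum.elim_comp_inl_inr]
  refine ⟨?_, ⟨xi, yi, rfl⟩, part1 xi yi, ?_⟩
  · rw [hpres]; exact hz1
  · rw [hsets, part1 xi yi, hz2]
end

section
/- Let l be a positive integer, Y and X real m×l matrices, and g ∈ ℝ^l. Then ‖Bᵀ Y g‖² + β² (e_mᵀ Y g)² + ‖B X g‖² = ‖Aᵀ (P Y g)‖² + ‖A (Q X g)‖². -/
open Matrix

lemma enormR_sq {ι : Type*} [Fintype ι] (v : ι → ℝ) : enormR v ^ 2 = v ⬝ᵥ v := by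
  rw [enormR, Real.sq_sqrt (by positivity)]
  simp [dotProduct, sq]

lemma dot_mulVec_left {k n : ℕ} (M : Matrix (Fin k) (Fin n) ℝ) (u : Fin n → ℝ)
    (w : Fin k → ℝ) : (M *ᵥ u) ⬝ᵥ w = u ⬝ᵥ Mᵀ *ᵥ w := by
  rw [Matrix.dotProduct_mulVec, Matrix.vecMul_transpose]

theorem stmt12 (m M N l : ℕ) (hm : 0 < m) (hl : 0 < l)
    (A : Matrix (Fin M) (Fin N) ℝ)
    (P : Matrix (Fin M) (Fin m) ℝ) (Q : Matrix (Fin N) (Fin m) ℝ)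
    (hP : Pᵀ * P = 1) (hQ : Qᵀ * Q = 1)
    (B : Matrix (Fin m) (Fin m) ℝ) (β : ℝ) (q : Fin N → ℝ)
    (hq : enormR q = 1) (hQq : Qᵀ.mulVec q = 0)
    (hAQ : A * Q = P * B)
    (hAP : Aᵀ * P = Q * Bᵀ + β • vecMulVec q (eLast m))
    (Y X : Matrix (Fin m) (Fin l) ℝ) (g : Fin l → ℝ) :
    enormR (Bᵀ.mulVec (Y.mulVec g)) ^ 2 + β ^ 2 * (eLast m ⬝ᵥ Y.mulVec g) ^ 2
      + enormR (B.mulVec (X.mulVec g)) ^ 2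
    = enormR (Aᵀ.mulVec (P.mulVec (Y.mulVec g))) ^ 2
      + enormR (A.mulVec (Q.mulVec (X.mulVec g))) ^ 2 := by
  set y := Y.mulVec g
  set x := X.mulVec g
  have hPn : ∀ v : Fin m → ℝ, enormR (P.mulVec v) ^ 2 = enormR v ^ 2 := by
    intro v
    rw [enormR_sq, enormR_sq, dot_mulVec_left, Matrix.mulVec_mulVec, hP,
      Matrix.one_mulVec]
  have hQn : ∀ v : Fin m → ℝ, enormR (Q.mulVec v) ^ 2 = enormR v ^ 2 := by
    intro v
    rw [enormR_sq, enormR_sq, dot_mulVec_left, Matrix.mulVec_mulVec, hQ,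
      Matrix.one_mulVec]
  have h1 : enormR (A.mulVec (Q.mulVec x)) ^ 2 = enormR (B.mulVec x) ^ 2 := by
    rw [Matrix.mulVec_mulVec, hAQ, ← Matrix.mulVec_mulVec, hPn]
  have hqq : q ⬝ᵥ q = 1 := by
    rw [← enormR_sq, hq, one_pow]
  have hQvq : ∀ v : Fin m → ℝ, Q.mulVec v ⬝ᵥ q = 0 := by
    intro v
    rw [dot_mulVec_left, hQq, dotProduct_zero]
  have h2 : enormR (Aᵀ.mulVec (P.mulVec y)) ^ 2
      = enormR (Bᵀ.mulVec y) ^ 2 + β ^ 2 * (eLast m ⬝ᵥ y) ^ 2 := by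
    have expand : Aᵀ.mulVec (P.mulVec y)
        = Q.mulVec (Bᵀ.mulVec y) + (β * (eLast m ⬝ᵥ y)) • q := by
      rw [Matrix.mulVec_mulVec, hAP, Matrix.add_mulVec, Matrix.smul_mulVec,
        ← Matrix.mulVec_mulVec]
      congr 1
      funext i
      simp only [Matrix.mulVec, Matrix.vecMulVec_apply, dotProduct, Pi.smul_apply,
        smul_eq_mul, Finset.mul_sum]
      rw [Finset.sum_mul]
      exact Finset.sum_congr rfl fun j _ => by ring
    rw [expand, enormR_sq, dotProduct_add, add_dotProduct, add_dotProduct,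
      dotProduct_smul, smul_dotProduct, smul_dotProduct, dotProduct_smul,
      hQvq, hqq, dotProduct_comm q, hQvq, ← enormR_sq, hQn]
    simp only [smul_eq_mul]
    ring
  rw [h1, h2]
end
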